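/- arXiv:1811.06799 — 6 statements merged into one kernel-verified Lean document; each statement's English description precedes it below -/
import Mathlib

section
/- For all integers c ≥ 2 and ℓ ≥ 1, if the edges of a complete graph on c^(cℓ−1) vertices are colored with c colors, then there exists a set of ℓ vertices all of whose pairwise connecting edges have the same color. -/
theorem ramsey_aux (c : ℕ) (hc : 2 ≤ c) {N : ℕ} (f : Fin N → Fin N → Fin c) :
    ∀ s : ℕ, ∀ n : Fin c → ℕ, (∑ i, n i) = s → ∀ A : Finset (Fin N), c ^ s ≤ A.card →
    ∃ (j : Fin c) (S : Finset (Fin N)), S ⊆ A ∧ S.card = n j + 1 ∧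
      ∀ i ∈ S, ∀ k ∈ S, i < k → f i k = j := by
  intro s
  induction s with
  | zero =>
    intro n hn A hA
    simp only [pow_zero] at hA
    obtain ⟨x, hx⟩ := Finset.card_pos.mp hA
    have j : Fin c := ⟨0, by omega⟩
    have hnj : n j = 0 := by
      have := Finset.sum_eq_zero_iff.mp hn j (Finset.mem_univ j)
      exact this
    exact ⟨j, {x}, Finset.singleton_subset_iff.mpr hx, by simp [hnj],
      by intro i hi k hk hik; simp at hi hk; omega⟩
  | succ s ih =>
    intro n hn A hA
    have hA1 : A.Nonempty := by
      apply Finset.card_pos.mp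
      have : 1 ≤ c ^ (s + 1) := Nat.one_le_pow _ _ (by omega)
      omega
    set x := A.min' hA1 with hxdef
    have hxA : x ∈ A := A.min'_mem hA1
    set B : Fin c → Finset (Fin N) := fun j => (A.erase x).filter (fun y => f x y = j) with hB
    have hcardsum : (A.erase x).card = ∑ j, (B j).card :=
      Finset.card_eq_sum_card_fiberwise (fun y _ => Finset.mem_univ (f x y))
    have herase : (A.erase x).card = A.card - 1 := Finset.card_erase_of_mem hxA
    -- pigeonhole: some color class has at least c^s elements
    have hpigeon : ∃ j, c ^ s ≤ (B j).card := by
      by_contra h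
      push_neg at h
      have hsum : ∑ j, (B j).card ≤ c * (c ^ s - 1) := by
        calc ∑ j, (B j).card ≤ ∑ _j : Fin c, (c ^ s - 1) := by
              apply Finset.sum_le_sum
              intro j _
              have := h j
              omega
          _ = c * (c ^ s - 1) := by simp [Finset.sum_const, mul_comm]
      have h1 : 1 ≤ c ^ s := Nat.one_le_pow _ _ (by omega)
      have h2 : c * (c ^ s - 1) = c ^ (s + 1) - c := by
        rw [Nat.mul_sub, pow_succ, mul_one, mul_comm]
      have h3 : c ≤ c ^ (s + 1) := Nat.le_self_pow (by omega) c
      omega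
    obtain ⟨j, hj⟩ := hpigeon
    have hBsubA : B j ⊆ A := (Finset.filter_subset _ _).trans (Finset.erase_subset _ _)
    have hBx : ∀ y ∈ B j, x < y ∧ f x y = j := by
      intro y hy
      simp only [hB, Finset.mem_filter, Finset.mem_erase] at hy
      refine ⟨?_, hy.2⟩
      have := A.min'_le y hy.1.2
      exact lt_of_le_of_ne this (Ne.symm hy.1.1)
    by_cases hnj : n j = 0
    · exact ⟨j, {x}, Finset.singleton_subset_iff.mpr hxA, by simp [hnj],
        by intro i hi k hk hik; simp at hi hk; omega⟩
    · -- recurse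
      set n' : Fin c → ℕ := Function.update n j (n j - 1) with hn'
      have hsum' : ∑ i, n' i = s := by
        have h1 : ∑ i, n' i = (n j - 1) + ∑ i ∈ Finset.univ.erase j, n i := by
          rw [hn', Finset.sum_update_of_mem (Finset.mem_univ j)]
          simp [Finset.sdiff_singleton_eq_erase]
        have h2 : n j + ∑ i ∈ Finset.univ.erase j, n i = s + 1 := by
          rw [Finset.add_sum_erase _ _ (Finset.mem_univ j), hn]
        omega
      obtain ⟨j', S', hS'B, hS'card, hS'mono⟩ := ih n' hsum' (B j) hj
      by_cases hjj : j' = j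
      · subst hjj
        have hxS' : x ∉ S' := by
          intro hx
          exact absurd (hBx x (hS'B hx)).1 (lt_irrefl x)
        refine ⟨j', insert x S', ?_, ?_, ?_⟩
        · intro y hy
          rcases Finset.mem_insert.mp hy with rfl | hy
          · exact hxA
          · exact hBsubA (hS'B hy)
        · rw [Finset.card_insert_of_notMem hxS', hS'card, hn',
            Function.update_self]
          omega
        · intro i hi k hk hik
          rcases Finset.mem_insert.mp hi with rfl | hi <;>
            rcases Finset.mem_insert.mp hk with rfl | hk
          · omega
          · exact (hBx k (hS'B hk)).2
          · exact absurd ((hBx i (hS'B hi)).1.trans hik) (lt_irrefl x)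
          · exact hS'mono i hi k hk hik
      · refine ⟨j', S', hS'B.trans hBsubA, ?_, hS'mono⟩
        rw [hS'card, hn', Function.update_of_ne hjj]

/-- Multicolor Ramsey bound: for `c ≥ 2` and `ℓ ≥ 1`, any `c`-coloring of the edges
of a complete graph on `c ^ (c*ℓ - 1)` vertices has a monochromatic set of `ℓ` vertices. -/
theorem ramsey_bound (c ℓ : ℕ) (hc : 2 ≤ c) (hℓ : 1 ≤ ℓ)
    (f : Fin (c ^ (c * ℓ - 1)) → Fin (c ^ (c * ℓ - 1)) → Fin c) :
    ∃ (S : Finset (Fin (c ^ (c * ℓ - 1)))) (col : Fin c),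
      S.card = ℓ ∧ ∀ i ∈ S, ∀ j ∈ S, i < j → f i j = col := by
  have hsum : ∑ _i : Fin c, (ℓ - 1) = c * (ℓ - 1) := by
    simp [Finset.sum_const, mul_comm]
  have hle : c * (ℓ - 1) ≤ c * ℓ - 1 := by
    have h1 : c * (ℓ - 1) = c * ℓ - c := by rw [Nat.mul_sub, mul_one]
    have h2 : c ≤ c * ℓ := Nat.le_mul_of_pos_right c (by omega)
    omega
  have hcard : c ^ (c * (ℓ - 1)) ≤ (Finset.univ : Finset (Fin (c ^ (c * ℓ - 1)))).card := by
    rw [Finset.card_univ, Fintype.card_fin]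
    exact Nat.pow_le_pow_right (by omega) hle
  obtain ⟨j, S, _, hScard, hSmono⟩ :=
    ramsey_aux c hc f (c * (ℓ - 1)) (fun _ => ℓ - 1) hsum Finset.univ hcard
  exact ⟨S, j, by omega, hSmono⟩
end

section
/- Let G = (L,R,E) be a bipartite graph. If both the ladder index and the co-matching index of G are strictly less than ℓ, then the semi-ladder index of G is strictly less than R²(ℓ), where R²(ℓ) is the 2-color Ramsey number guaranteeing a monochromatic set of size ℓ. -/
/-- A ladder of order `n` in the bipartite graph given by `E : L → R → Prop`. -/
def IsLadder {L R : Type*} (E : L → R → Prop) (n : ℕ) (a : Fin n → L) (b : Fin n → R) : Prop :=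
  ∀ i j, E (a i) (b j) ↔ j < i

/-- A co-matching of order `n`. -/
def IsCoMatching {L R : Type*} (E : L → R → Prop) (n : ℕ) (a : Fin n → L) (b : Fin n → R) : Prop :=
  ∀ i j, E (a i) (b j) ↔ i ≠ j

/-- A semi-ladder of order `n`. -/
def IsSemiLadder {L R : Type*} (E : L → R → Prop) (n : ℕ) (a : Fin n → L) (b : Fin n → R) : Prop :=
  (∀ i j, j < i → E (a i) (b j)) ∧ ∀ i, ¬ E (a i) (b i)

/-- `N` satisfies the `c`-color Ramsey property for monochromatic sets of size `ℓ`. -/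
def RamseyProp (N c ℓ : ℕ) : Prop :=
  ∀ f : Fin N → Fin N → Fin c, ∃ (S : Finset (Fin N)) (col : Fin c),
    S.card = ℓ ∧ ∀ i ∈ S, ∀ j ∈ S, i < j → f i j = col

/-- If both the ladder index and the co-matching index of a bipartite graph are
strictly less than `ℓ`, then its semi-ladder index is strictly less than `R²(ℓ)`. -/
theorem semiLadder_of_ladder_and_coMatching {L R : Type*} (E : L → R → Prop) (ℓ R2 : ℕ)
    (hRam : RamseyProp R2 2 ℓ)
    (hLad : ¬ ∃ (a : Fin ℓ → L) (b : Fin ℓ → R), IsLadder E ℓ a b)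
    (hCo : ¬ ∃ (a : Fin ℓ → L) (b : Fin ℓ → R), IsCoMatching E ℓ a b) :
    ¬ ∃ (a : Fin R2 → L) (b : Fin R2 → R), IsSemiLadder E R2 a b := by
  rintro ⟨a, b, hlt, hdiag⟩
  classical
  obtain ⟨S, col, hcard, hmono⟩ :=
    hRam (fun i j => if E (a i) (b j) then (0 : Fin 2) else 1)
  set e := S.orderEmbOfFin hcard with he
  have hmem : ∀ i, e i ∈ S := fun i => S.orderEmbOfFin_mem hcard i
  have hmonoE : ∀ i j : Fin ℓ, i < j →
      (if E (a (e i)) (b (e j)) then (0 : Fin 2) else 1) = col := by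
    intro i j hij
    exact hmono _ (hmem i) _ (hmem j) (e.strictMono hij)
  fin_cases col
  · -- col = 0 : co-matching
    apply hCo
    refine ⟨fun i => a (e i), fun i => b (e i), fun i j => ?_⟩
    constructor
    · intro hE hij
      subst hij
      exact hdiag _ hE
    · intro hij
      rcases lt_trichotomy i j with h | h | h
      · have := hmonoE i j h
        by_contra hE
        simp [hE] at this
      · exact absurd h hij
      · exact hlt _ _ (e.strictMono h)
  · -- col = 1 : ladder
    apply hLad
    refine ⟨fun i => a (e i), fun i => b (e i), fun i j => ?_⟩
    constructor
    · intro hE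
      rcases lt_trichotomy j i with h | h | h
      · exact h
      · subst h; exact absurd hE (hdiag _)
      · have := hmonoE i j h
        simp [hE] at this
    · intro h
      exact hlt _ _ (e.strictMono h)
end

section
/- Let E ⊆ X × R be a relation with semi-ladder index strictly less than ℓ, let k ≥ 2, and let f₁,…,f_k : X → X be functions (arising from permutations of tuple coordinates). Define F ⊆ X × R by (a,b) ∈ F iff (fⱼ(a),b) ∈ E for some j ∈ {1,…,k}. Then the semi-ladder index of F is strictly less than k^(ℓ−1). -/
lemma semiLadder_key {X R : Type*} (E : X → R → Prop) {k : ℕ} (hk : 2 ≤ k) (f : Fin k → X → X) :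
    ∀ (m N : ℕ) (a : ℕ → X) (b : ℕ → R), k ^ m ≤ N →
    (∀ i j, j < i → i < N → ∃ c, E (f c (a i)) (b j)) →
    ∃ (idx : Fin (m+1) → ℕ) (col : Fin (m+1) → Fin k),
      StrictMono idx ∧ (∀ p, idx p < N) ∧
      ∀ p q : Fin (m+1), q < p → E (f (col p) (a (idx p))) (b (idx q)) := by
  intro m
  induction m with
  | zero =>
    intro N a b hN _
    refine ⟨fun _ => 0, fun _ => ⟨0, by omega⟩, ?_, fun p => by simp only [pow_zero] at hN; show 0 < N; omega, ?_⟩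
    · intro p q h; exact absurd h (by omega)
    · intro p q h; exact absurd (Fin.lt_iff_val_lt_val.mp h) (by omega)
  | succ m IH =>
    intro N a b hN hpos
    have hk1 : 1 ≤ k ^ m := Nat.one_le_pow _ _ (by omega)
    have hkk : k * k ^ m ≤ N := by rw [mul_comm, ← pow_succ]; exact hN
    have hN2 : 2 ≤ N := le_trans (le_trans hk (Nat.le_self_pow (by omega) k)) hN
    -- color assigned to each j < N-1 by the last element a (N-1)
    have hspec : ∀ j, j < N - 1 → ∃ c, E (f c (a (N-1))) (b j) :=
      fun j hj => hpos (N-1) j hj (by omega)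
    set g : ℕ → Fin k := fun j => if h : j < N - 1 then Classical.choose (hspec j h) else ⟨0, by omega⟩ with hg
    have hgspec : ∀ j, (h : j < N - 1) → E (f (g j) (a (N-1))) (b j) := by
      intro j h
      simp only [hg, dif_pos h]
      exact Classical.choose_spec (hspec j h)
    -- pigeonhole
    have hcard : (Finset.univ : Finset (Fin k)).card * (k ^ m - 1) < (Finset.range (N-1)).card := by
      simp only [Finset.card_univ, Fintype.card_fin, Finset.card_range]
      have : k * (k ^ m - 1) = k * k ^ m - k := by
        rw [Nat.mul_sub, mul_one]
      omega
    obtain ⟨c, -, hc⟩ := Finset.exists_lt_card_fiber_of_mul_lt_card_of_maps_to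
      (f := g) (fun x _ => Finset.mem_univ (g x)) hcard
    set S : Finset ℕ := (Finset.range (N-1)).filter (fun x => g x = c) with hS
    have hScard : k ^ m ≤ S.card := by omega
    have hSmem : ∀ j ∈ S, j < N - 1 ∧ g j = c := by
      intro j hj
      simp only [hS, Finset.mem_filter, Finset.mem_range] at hj
      exact hj
    set M := S.card with hM
    set e := S.orderIsoOfFin (rfl : S.card = M) with he
    set enum : ℕ → ℕ := fun n => if h : n < M then (e ⟨n, h⟩ : ℕ) else 0 with henum
    have henum_mem : ∀ n, (h : n < M) → enum n ∈ S := by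
      intro n h
      simp only [henum, dif_pos h]
      exact (e ⟨n, h⟩).2
    have henum_mono : ∀ n₁ n₂, n₁ < n₂ → n₂ < M → enum n₁ < enum n₂ := by
      intro n₁ n₂ h hM2
      simp only [henum, dif_pos hM2, dif_pos (lt_trans h hM2)]
      exact e.strictMono (show (⟨n₁, _⟩ : Fin M) < ⟨n₂, _⟩ from Fin.mk_lt_mk.mpr h)
    have henum_lt : ∀ n, (h : n < M) → enum n < N - 1 := fun n h => (hSmem _ (henum_mem n h)).1
    -- apply IH to the sub-ladder
    obtain ⟨idx', col', mono', bound', lad'⟩ :=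
      IH M (fun n => a (enum n)) (fun n => b (enum n)) hScard
        (fun i j hji hiM =>
          hpos (enum i) (enum j) (henum_mono j i hji hiM) (by have := henum_lt i hiM; omega))
    refine ⟨fun p => if h : (p : ℕ) < m + 1 then enum (idx' ⟨p, h⟩) else N - 1,
            fun p => if h : (p : ℕ) < m + 1 then col' ⟨p, h⟩ else c, ?_, ?_, ?_⟩
    · intro p q hpq
      have hpq' : (p : ℕ) < (q : ℕ) := hpq
      have hq : (q : ℕ) < m + 2 := q.2
      by_cases h2 : (q : ℕ) < m + 1
      · have hp : (p : ℕ) < m + 1 := by omega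
        simp only [dif_pos h2, dif_pos hp]
        have := mono' (show (⟨p, hp⟩ : Fin (m+1)) < ⟨q, h2⟩ from Fin.mk_lt_mk.mpr hpq')
        exact henum_mono _ _ this (bound' _)
      · have hp : (p : ℕ) < m + 1 := by omega
        simp only [dif_neg h2, dif_pos hp]
        exact henum_lt _ (bound' _)
    · intro p
      by_cases h2 : (p : ℕ) < m + 1
      · simp only [dif_pos h2]; have := henum_lt _ (bound' ⟨p, h2⟩); omega
      · simp only [dif_neg h2]; omega
    · intro p q hpq
      have hpq' : (q : ℕ) < (p : ℕ) := hpq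
      have hq : (q : ℕ) < m + 1 := by omega
      by_cases h2 : (p : ℕ) < m + 1
      · simp only [dif_pos h2, dif_pos hq, dif_pos h2, dif_pos hq]
        exact lad' ⟨p, h2⟩ ⟨q, hq⟩ (Fin.mk_lt_mk.mpr hpq')
      · simp only [dif_neg h2, dif_pos hq, dif_neg h2]
        have hmem := hSmem _ (henum_mem _ (bound' ⟨q, hq⟩))
        have := hgspec _ hmem.1
        rwa [hmem.2] at this

/-- If `E ⊆ X × R` has semi-ladder index less than `ℓ`, `k ≥ 2`, and
`F a b ↔ ∃ j, E (f j a) b` for functions `f₁, …, f_k : X → X`, then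
the semi-ladder index of `F` is less than `k ^ (ℓ - 1)`. -/
theorem semiLadder_disjunction {X R : Type*} (E : X → R → Prop) (ℓ k : ℕ) (hk : 2 ≤ k)
    (f : Fin k → X → X)
    (hE : ¬ ∃ (a : Fin ℓ → X) (b : Fin ℓ → R), IsSemiLadder E ℓ a b)
    (F : X → R → Prop) (hF : ∀ a b, F a b ↔ ∃ j : Fin k, E (f j a) b) :
    ¬ ∃ (a : Fin (k ^ (ℓ - 1)) → X) (b : Fin (k ^ (ℓ - 1)) → R),
        IsSemiLadder F (k ^ (ℓ - 1)) a b := by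
  rcases Nat.eq_zero_or_pos ℓ with rfl | hl
  · exact fun _ => hE ⟨Fin.elim0, Fin.elim0, fun i => i.elim0, fun i => i.elim0⟩
  obtain ⟨l, rfl⟩ : ∃ l, ℓ = l + 1 := ⟨ℓ - 1, by omega⟩
  rintro ⟨a, b, hpos, hdiag⟩
  have hNpos : 0 < k ^ l := Nat.pow_pos (by omega)
  set A : ℕ → X := fun n => if h : n < k ^ l then a ⟨n, h⟩ else a ⟨0, hNpos⟩ with hA
  set B : ℕ → R := fun n => if h : n < k ^ l then b ⟨n, h⟩ else b ⟨0, hNpos⟩ with hB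
  have hcond : ∀ i j, j < i → i < k ^ l → ∃ c, E (f c (A i)) (B j) := by
    intro i j hji hiN
    have hjN : j < k ^ l := lt_trans hji hiN
    simp only [hA, hB, dif_pos hiN, dif_pos hjN]
    have := hpos ⟨i, hiN⟩ ⟨j, hjN⟩ (Fin.mk_lt_mk.mpr hji)
    exact (hF _ _).mp this
  obtain ⟨idx, col, -, bound, lad⟩ := semiLadder_key E hk f l (k ^ l) A B le_rfl hcond
  refine hE ⟨fun p => f (col p) (A (idx p)), fun p => B (idx p), lad, ?_⟩
  intro p
  have h := bound p
  simp only [hA, hB, dif_pos h]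
  intro hcon
  exact (hdiag ⟨idx p, h⟩) ((hF _ _).mpr ⟨col p, hcon⟩)
end

section
/- Fix t ≥ 1 and let G be a graph with no K_{t,t} subgraph. Then there do not exist vertices a₁,…,a_{3t} and b₁,…,b_{3t} such that for all i > j, aᵢ and bⱼ are equal or adjacent, and for all i, aᵢ and bᵢ are distinct and non-adjacent. That is, the semi-ladder index of the closed-neighborhood relation δ₁(G) is strictly less than 3t. -/
/-- `G` is `K_{t,t}`-free: there are no disjoint vertex sets `A`, `B` of size `t` each
with every vertex of `A` adjacent to every vertex of `B`. -/
def KttFree {V : Type*} (G : SimpleGraph V) (t : ℕ) : Prop :=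
  ¬ ∃ (A B : Finset V), Disjoint A B ∧ A.card = t ∧ B.card = t ∧
      ∀ a ∈ A, ∀ b ∈ B, G.Adj a b

/-- In a `K_{t,t}`-free graph, the closed-neighborhood relation `δ₁` admits no
semi-ladder of order `3t`. -/
theorem kttFree_no_semiLadder {V : Type*} (G : SimpleGraph V) (t : ℕ) (ht : 1 ≤ t)
    (hG : KttFree G t) :
    ¬ ∃ (a b : Fin (3 * t) → V),
        (∀ i j, j < i → (a i = b j ∨ G.Adj (a i) (b j))) ∧
        (∀ i, ¬ (a i = b i ∨ G.Adj (a i) (b i))) := by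
  classical
  rintro ⟨a, b, hlt, hne⟩
  have ha : Function.Injective a := by
    intro i j h
    rcases lt_trichotomy i j with hij | hij | hij
    · have h2 := hlt j i hij
      rw [← h] at h2
      exact absurd h2 (hne i)
    · exact hij
    · have h2 := hlt i j hij
      rw [h] at h2
      exact absurd h2 (hne j)
  have hb : Function.Injective b := by
    intro i j h
    rcases lt_trichotomy i j with hij | hij | hij
    · have h2 := hlt j i hij
      rw [h] at h2
      exact absurd h2 (hne j)
    · exact hij
    · have h2 := hlt i j hij
      rw [← h] at h2
      exact absurd h2 (hne i)
  set Jfin : Finset (Fin (3 * t)) := Finset.univ.filter (fun j => (j : ℕ) < t) with hJdef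
  have hJcard : Jfin.card = t := by
    have himg : Jfin = (Finset.univ : Finset (Fin t)).image
        (Fin.castLE (by omega : t ≤ 3 * t)) := by
      ext i
      simp only [hJdef, Finset.mem_filter, Finset.mem_univ, true_and, Finset.mem_image]
      constructor
      · intro hi
        exact ⟨⟨(i : ℕ), hi⟩, rfl⟩
      · rintro ⟨j, -, rfl⟩
        exact j.isLt
    rw [himg, Finset.card_image_of_injective _ (Fin.castLE_injective _)]
    simp
  set Bset : Finset V := Jfin.image b with hBdef
  have hBcard : Bset.card = t := by
    rw [hBdef, Finset.card_image_of_injective _ hb, hJcard]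
  set S : Finset (Fin (3 * t)) := Finset.univ.filter (fun i => a i ∈ Bset) with hSdef
  have hScard : S.card ≤ t := by
    calc S.card ≤ Bset.card := by
          apply Finset.card_le_card_of_injOn a
          · intro i hi
            rw [hSdef, Finset.mem_coe, Finset.mem_filter] at hi
            exact hi.2
          · exact ha.injOn
      _ = t := hBcard
  set T : Finset (Fin (3 * t)) := Finset.univ.filter (fun i => ¬ (i : ℕ) < t) \ S with hTdef
  have hTcard : t ≤ T.card := by
    have hfilt : (Finset.univ.filter (fun i : Fin (3 * t) => ¬ (i : ℕ) < t)).card = 2 * t := by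
      have := Finset.card_filter_add_card_filter_not
        (s := (Finset.univ : Finset (Fin (3 * t)))) (p := fun i => (i : ℕ) < t)
      rw [← hJdef] at this
      simp only [Finset.card_univ, Fintype.card_fin] at this
      omega
    have := Finset.le_card_sdiff S (Finset.univ.filter (fun i : Fin (3 * t) => ¬ (i : ℕ) < t))
    rw [hTdef]
    omega
  obtain ⟨I, hIT, hIcard⟩ := Finset.exists_subset_card_eq hTcard
  apply hG
  refine ⟨I.image a, Bset, ?_, ?_, hBcard, ?_⟩
  · rw [Finset.disjoint_left]
    rintro x hx
    simp only [Finset.mem_image] at hx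
    obtain ⟨i, hi, rfl⟩ := hx
    have := hIT hi
    simp only [hTdef, Finset.mem_sdiff, hSdef, Finset.mem_filter, Finset.mem_univ,
      true_and] at this
    intro hxB
    exact this.2 hxB
  · rw [Finset.card_image_of_injective _ ha, hIcard]
  · intro x hx y hy
    simp only [Finset.mem_image] at hx
    obtain ⟨i, hi, rfl⟩ := hx
    simp only [hBdef, Finset.mem_image] at hy
    obtain ⟨j, hj, rfl⟩ := hy
    have hiT := hIT hi
    rw [hTdef, Finset.mem_sdiff, Finset.mem_filter] at hiT
    have hjt : (j : ℕ) < t := by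
      simpa [hJdef] using hj
    have hji : j < i := by
      rw [Fin.lt_def]
      omega
    rcases hlt i j hji with heq | hadj
    · exfalso
      apply hiT.2
      have hmem : a i ∈ Bset := by
        rw [heq, hBdef]; exact Finset.mem_image_of_mem b hj
      simp only [hSdef, Finset.mem_filter, Finset.mem_univ, true_and]
      exact hmem
    · exact hadj
end

section
/- Fix t ≥ 1 and let G = (V,E) be a K_{t,t}-free graph. For any S ⊆ V with |S| ≤ m, the number of distinct sets of the form N(u) ∩ S over u ∈ V \ S is at most O(m^t); more precisely, it is bounded by the number of subsets of S of size less than t, plus (t−1)·m^t. -/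
/-- In a `K_{t,t}`-free graph, the number of distinct neighborhood traces `N(u) ∩ S`
over vertices `u ∉ S` is at most the number of subsets of `S` of size less than `t`
plus `(t-1)·m^t`, where `|S| ≤ m`. -/
theorem kttFree_trace_bound {V : Type*} (G : SimpleGraph V) (t : ℕ) (ht : 1 ≤ t)
    (hG : KttFree G t) (m : ℕ) (S : Finset V) (hS : S.card ≤ m) :
    ({A : Set V | ∃ u, u ∉ S ∧ A = {v | v ∈ S ∧ G.Adj u v}}).Finite ∧
    ({A : Set V | ∃ u, u ∉ S ∧ A = {v | v ∈ S ∧ G.Adj u v}}).ncard ≤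
      (S.powerset.filter (fun T => T.card < t)).card + (t - 1) * m ^ t := by
  classical
  set P := {A : Set V | ∃ u, u ∉ S ∧ A = {v | v ∈ S ∧ G.Adj u v}} with hP
  obtain hV | hV := isEmpty_or_nonempty V
  · have hPe : P = ∅ := by
      ext A
      simp only [hP, Set.mem_setOf_eq, Set.mem_empty_iff_false, iff_false]
      rintro ⟨u, -, -⟩
      exact hV.elim u
    rw [hPe]
    simp
  set F : Finset (Finset V) :=
    S.powerset.filter (fun T => ∃ u, u ∉ S ∧ T = S.filter (fun v => G.Adj u v)) with hF
  have hPF : P = (fun T : Finset V => (↑T : Set V)) '' ↑F := by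
    ext A
    simp only [hP, Set.mem_setOf_eq, Set.mem_image, Finset.mem_coe, hF, Finset.mem_filter,
      Finset.mem_powerset]
    constructor
    · rintro ⟨u, hu, rfl⟩
      refine ⟨S.filter (fun v => G.Adj u v), ⟨Finset.filter_subset _ _, u, hu, rfl⟩, ?_⟩
      ext v; simp
    · rintro ⟨T, ⟨hTS, u, hu, rfl⟩, rfl⟩
      refine ⟨u, hu, ?_⟩
      ext v; simp
  have hfin : P.Finite := by rw [hPF]; exact F.finite_toSet.image _
  refine ⟨hfin, ?_⟩
  have hncard : P.ncard = F.card := by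
    rw [hPF, Set.ncard_image_of_injective _ (fun a b h => Finset.coe_injective h),
      Set.ncard_coe_finset]
  rw [hncard]
  -- choose witnesses
  have hwit : ∀ T : Finset V, ∃ u, T ∈ F → (u ∉ S ∧ T = S.filter (fun v => G.Adj u v)) := by
    intro T
    by_cases hT : T ∈ F
    · obtain ⟨u, hu⟩ := (Finset.mem_filter.mp hT).2
      exact ⟨u, fun _ => hu⟩
    · exact ⟨Classical.arbitrary V, fun h => absurd h hT⟩
  choose uf huf using hwit
  have hu1 : ∀ T ∈ F, uf T ∉ S := fun T hT => (huf T hT).1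
  have hu2 : ∀ T ∈ F, T = S.filter (fun v => G.Adj (uf T) v) := fun T hT => (huf T hT).2
  have hufinj : ∀ T ∈ F, ∀ T' ∈ F, uf T = uf T' → T = T' := by
    intro T hT T' hT' h
    rw [hu2 T hT, hu2 T' hT', h]
  -- split F
  have hsplit := Finset.card_filter_add_card_filter_not
    (s := F) (p := fun T => T.card < t)
  set F₁ := F.filter (fun T => T.card < t) with hF₁
  set F₂ := F.filter (fun T => ¬ T.card < t) with hF₂
  have h1 : F₁.card ≤ (S.powerset.filter (fun T => T.card < t)).card := by
    apply Finset.card_le_card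
    intro T hT
    simp only [hF₁, Finset.mem_filter, hF, Finset.mem_powerset] at hT ⊢
    exact ⟨hT.1.1, hT.2⟩
  -- bound F₂
  set bf : Finset V → Finset V := fun T =>
    if h : t ≤ T.card then (Finset.exists_subset_card_eq h).choose else ∅ with hbf
  have hbf1 : ∀ T, t ≤ T.card → bf T ⊆ T ∧ (bf T).card = t := by
    intro T h
    have := (Finset.exists_subset_card_eq h).choose_spec
    simp only [hbf, dif_pos h]
    exact this
  have hF₂mem : ∀ T ∈ F₂, T ∈ F ∧ t ≤ T.card := by
    intro T hT
    simp only [hF₂, Finset.mem_filter, not_lt] at hT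
    exact ⟨hT.1, hT.2⟩
  have hfiber : ∀ B ∈ F₂.image bf, (F₂.filter (fun T => bf T = B)).card ≤ t - 1 := by
    intro B hB
    obtain ⟨T₀, hT₀, rfl⟩ := Finset.mem_image.mp hB
    obtain ⟨hT₀F, hT₀c⟩ := hF₂mem T₀ hT₀
    obtain ⟨hB1, hB2⟩ := hbf1 T₀ hT₀c
    by_contra hcon
    push_neg at hcon
    have hcon' : t ≤ (F₂.filter (fun T => bf T = bf T₀)).card := by omega
    set fib := F₂.filter (fun T => bf T = bf T₀) with hfib
    have hfibF : ∀ T ∈ fib, T ∈ F := fun T hT =>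
      (hF₂mem T (Finset.mem_filter.mp hT).1).1
    -- image of uf on fib
    have hcardA : (Finset.image uf fib).card = fib.card := by
      apply Finset.card_image_of_injOn
      intro T hT T' hT' h
      exact hufinj T (hfibF T hT) T' (hfibF T' hT') h
    have hA : t ≤ (Finset.image uf fib).card := by omega
    obtain ⟨A, hAsub, hAcard⟩ := Finset.exists_subset_card_eq hA
    apply hG
    refine ⟨A, bf T₀, ?_, hAcard, hB2, ?_⟩
    · rw [Finset.disjoint_left]
      intro a haA haB
      obtain ⟨T, hT, rfl⟩ := Finset.mem_image.mp (hAsub haA)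
      have hBS : bf T₀ ⊆ S := hB1.trans (Finset.mem_powerset.mp (Finset.mem_filter.mp hT₀F).1)
      exact hu1 T (hfibF T hT) (hBS haB)
    · intro a haA b hbB
      obtain ⟨T, hT, rfl⟩ := Finset.mem_image.mp (hAsub haA)
      have hTF := hfibF T hT
      have hbfT : bf T = bf T₀ := (Finset.mem_filter.mp hT).2
      have hTc : t ≤ T.card := (hF₂mem T (Finset.mem_filter.mp hT).1).2
      have hbT : b ∈ T := (hbf1 T hTc).1 (hbfT ▸ hbB)
      have := hu2 T hTF
      rw [this] at hbT
      exact (Finset.mem_filter.mp hbT).2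
  have h2 : F₂.card ≤ (t - 1) * (F₂.image bf).card :=
    Finset.card_le_mul_card_image F₂ (t - 1) hfiber
  have himg : (F₂.image bf).card ≤ m ^ t := by
    have hsub : F₂.image bf ⊆ S.powersetCard t := by
      intro B hB
      obtain ⟨T, hT, rfl⟩ := Finset.mem_image.mp hB
      obtain ⟨hTF, hTc⟩ := hF₂mem T hT
      obtain ⟨hb1, hb2⟩ := hbf1 T hTc
      rw [Finset.mem_powersetCard]
      exact ⟨hb1.trans (Finset.mem_powerset.mp (Finset.mem_filter.mp hTF).1), hb2⟩
    calc (F₂.image bf).card ≤ (S.powersetCard t).card := Finset.card_le_card hsub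
      _ = S.card.choose t := Finset.card_powersetCard t S
      _ ≤ m.choose t := Nat.choose_le_choose t hS
      _ ≤ m ^ t := Nat.choose_le_pow m t
  calc F.card = F₁.card + F₂.card := hsplit.symm
    _ ≤ (S.powerset.filter (fun T => T.card < t)).card + (t - 1) * (F₂.image bf).card :=
        Nat.add_le_add h1 h2
    _ ≤ (S.powerset.filter (fun T => T.card < t)).card + (t - 1) * m ^ t := by
        exact Nat.add_le_add_left (Nat.mul_le_mul_left _ himg) _
end

section
/- Let H = (L,R,E) be a bipartite graph with ladder index strictly less than ℓ, and let p ≥ 1. Define H' to be the bipartite graph whose left part is L, whose right part is the family of subsets P ⊆ R with |P| ≤ p, and where a ∈ L is adjacent to P iff a is adjacent in H to every element of P. Then the ladder index of H' is strictly less than R^p(2ℓ), the p-color Ramsey number guaranteeing a monochromatic set of size 2ℓ. -/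
/-- If `H` has ladder index less than `ℓ` and `p ≥ 1`, then the auxiliary bipartite graph
`H'` (left part `L`, right part the sets `P ⊆ R` with `|P| ≤ p`, with `a` adjacent to `P`
iff `a` is adjacent in `H` to every element of `P`) has ladder index less than `R^p(2ℓ)`. -/
theorem ladder_index_powerGraph {L R : Type*} (E : L → R → Prop) (ℓ p Rp : ℕ) (hp : 1 ≤ p)
    (hRam : RamseyProp Rp p (2 * ℓ))
    (hLad : ¬ ∃ (a : Fin ℓ → L) (b : Fin ℓ → R), IsLadder E ℓ a b) :
    ¬ ∃ (a : Fin Rp → L) (P : Fin Rp → Finset R),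
        (∀ i, (P i).card ≤ p) ∧
        ∀ i j, (∀ x ∈ P j, E (a i) x) ↔ j < i := by
  classical
  rintro ⟨a, P, hcard, hadj⟩
  -- for i < j there is a non-neighbor of a i in P j
  have key : ∀ i j : Fin Rp, i < j → ∃ x ∈ P j, ¬ E (a i) x := by
    intro i j hij
    by_contra h
    push_neg at h
    exact absurd ((hadj i j).1 h) (not_lt.2 hij.le)
  let f : Fin Rp → Fin Rp → Fin p := fun i j =>
    if h : ∃ x ∈ P j, ¬ E (a i) x then
      ⟨(P j).toList.idxOf h.choose,
        lt_of_lt_of_le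
          (List.idxOf_lt_length_iff.2 (Finset.mem_toList.2 h.choose_spec.1))
          (by rw [Finset.length_toList]; exact hcard j)⟩
    else ⟨0, hp⟩
  obtain ⟨S, col, hScard, hmono⟩ := hRam f
  let T := S.orderIsoOfFin hScard
  have h2l : ∀ k : Fin ℓ, 2 * (k : ℕ) < 2 * ℓ := fun k => by have := k.isLt; omega
  have h2l' : ∀ k : Fin ℓ, 2 * (k : ℕ) + 1 < 2 * ℓ := fun k => by have := k.isLt; omega
  let u : Fin ℓ → Fin Rp := fun k => (T ⟨2 * k, h2l k⟩ : Fin Rp)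
  let v : Fin ℓ → Fin Rp := fun k => (T ⟨2 * k + 1, h2l' k⟩ : Fin Rp)
  have uS : ∀ k, u k ∈ S := fun k => (T ⟨2 * k, h2l k⟩).2
  have vS : ∀ k, v k ∈ S := fun k => (T ⟨2 * k + 1, h2l' k⟩).2
  have hlt : ∀ i j : Fin ℓ, (i : ℕ) ≤ (j : ℕ) → u i < v j := by
    intro i j h
    exact Subtype.coe_lt_coe.2 (T.strictMono (by simp [Fin.lt_def]; omega))
  have hlt2 : ∀ i j : Fin ℓ, (j : ℕ) < (i : ℕ) → v j < u i := by
    intro i j h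
    exact Subtype.coe_lt_coe.2 (T.strictMono (by simp [Fin.lt_def]; omega))
  -- the candidate right-side vertices
  let B : Fin ℓ → R := fun j => (key (u j) (v j) (hlt j j le_rfl)).choose
  have hBmem : ∀ j, B j ∈ P (v j) := fun j => (key (u j) (v j) (hlt j j le_rfl)).choose_spec.1
  -- the main non-adjacency lemma
  have main : ∀ i j : Fin ℓ, (i : ℕ) ≤ (j : ℕ) → ¬ E (a (u i)) (B j) := by
    intro i j hij
    have h1 : ∃ x ∈ P (v j), ¬ E (a (u i)) x := key (u i) (v j) (hlt i j hij)
    have h2 : ∃ x ∈ P (v j), ¬ E (a (u j)) x := key (u j) (v j) (hlt j j le_rfl)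
    have e1 : f (u i) (v j) = col := hmono _ (uS i) _ (vS j) (hlt i j hij)
    have e2 : f (u j) (v j) = col := hmono _ (uS j) _ (vS j) (hlt j j le_rfl)
    have e1' : f (u i) (v j) = ⟨(P (v j)).toList.idxOf h1.choose, _⟩ := dif_pos h1
    have e2' : f (u j) (v j) = ⟨(P (v j)).toList.idxOf h2.choose, _⟩ := dif_pos h2
    have hidx : (P (v j)).toList.idxOf h1.choose = (P (v j)).toList.idxOf h2.choose := by
      have := congrArg Fin.val (e1'.symm.trans (e1.trans (e2.symm.trans e2')))
      simpa using this
    have heq : h1.choose = h2.choose :=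
      (List.idxOf_inj (Finset.mem_toList.2 h1.choose_spec.1)).1 hidx
    have : ¬ E (a (u i)) (h1.choose) := h1.choose_spec.2
    rw [heq] at this
    exact this
  refine hLad ⟨fun k => a (u k), B, fun i j => ?_⟩
  constructor
  · intro hE
    by_contra h
    exact main i j (Fin.not_lt.mp h) hE
  · intro hji
    exact (hadj (u i) (v j)).2 (hlt2 i j hji) (B j) (hBmem j)
end
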